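/- (Sturm Comparison Theorem) Let V : ℝ → ℝ be bounded and continuous, let E₁ ≤ E₂ be reals, and for j = 1,2 let u_j be a solution of −u_j″ + V u_j = E_j u_j on [a,b], neither identically zero. Suppose a < b and u₁(a) = u₁(b) = 0. If E₂ > E₁, then u₂ has a zero in the open interval (a,b). If E₂ = E₁ and u₂(a) ≠ 0, then u₂ has a zero in (a,b). -/

import Mathlib

open Set Filter Topology

lemma deriv_sign_right {f : ℝ → ℝ} {a c : ℝ} (hf : DifferentiableAt ℝ f a)
    (hac : a < c) (h0 : f a = 0) (hpos : ∀ x ∈ Set.Ioo a c, 0 ≤ f x) : 0 ≤ deriv f a := by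
  have h := hf.hasDerivAt
  rw [hasDerivAt_iff_tendsto_slope] at h
  have h' : Tendsto (slope f a) (𝓝[>] a) (𝓝 (deriv f a)) :=
    h.mono_left (nhdsWithin_mono _ (fun x hx => ne_of_gt hx))
  refine ge_of_tendsto h' ?_
  filter_upwards [Ioo_mem_nhdsGT_of_mem ⟨le_refl a, hac⟩] with x hx
  rw [slope_def_field, h0, sub_zero]
  exact div_nonneg (hpos x hx) (by linarith [hx.1])

lemma deriv_sign_left {f : ℝ → ℝ} {a c : ℝ} (hf : DifferentiableAt ℝ f a)
    (hac : c < a) (h0 : f a = 0) (hpos : ∀ x ∈ Set.Ioo c a, 0 ≤ f x) : deriv f a ≤ 0 := by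
  have h := hf.hasDerivAt
  rw [hasDerivAt_iff_tendsto_slope] at h
  have h' : Tendsto (slope f a) (𝓝[<] a) (𝓝 (deriv f a)) :=
    h.mono_left (nhdsWithin_mono _ (fun x hx => ne_of_lt hx))
  refine le_of_tendsto h' ?_
  filter_upwards [Ioo_mem_nhdsLT_of_mem ⟨hac, le_refl a⟩] with x hx
  rw [slope_def_field, h0, sub_zero]
  exact div_nonpos_of_nonneg_of_nonpos (hpos x hx) (by linarith [hx.2])

lemma cont_sign_right {f : ℝ → ℝ} {a c : ℝ} (hf : ContinuousAt f a)
    (hac : a < c) (hpos : ∀ x ∈ Set.Ioo a c, 0 ≤ f x) : 0 ≤ f a := by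
  have h' : Tendsto f (𝓝[>] a) (𝓝 (f a)) :=
    (hf.continuousWithinAt).tendsto
  refine ge_of_tendsto h' ?_
  filter_upwards [Ioo_mem_nhdsGT_of_mem ⟨le_refl a, hac⟩] with x hx using hpos x hx

lemma cont_sign_left {f : ℝ → ℝ} {a c : ℝ} (hf : ContinuousAt f a)
    (hac : c < a) (hpos : ∀ x ∈ Set.Ioo c a, 0 ≤ f x) : 0 ≤ f a := by
  have h' : Tendsto f (𝓝[<] a) (𝓝 (f a)) :=
    (hf.continuousWithinAt).tendsto
  refine ge_of_tendsto h' ?_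
  filter_upwards [Ioo_mem_nhdsLT_of_mem ⟨hac, le_refl a⟩] with x hx using hpos x hx

lemma contdiff_facts {u : ℝ → ℝ} (h : ContDiff ℝ 2 u) :
    Differentiable ℝ u ∧ Differentiable ℝ (deriv u) ∧ Continuous (deriv (deriv u)) := by
  have h2 : ContDiff ℝ ((1 : WithTop ℕ∞) + 1) u := by norm_num at h ⊢; exact h
  have h1 : ContDiff ℝ 1 (deriv u) := (contDiff_succ_iff_deriv.mp h2).2.2
  have h0 : ContDiff ℝ ((0 : WithTop ℕ∞) + 1) (deriv u) := by norm_num at h1 ⊢; exact h1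
  exact ⟨h.differentiable (by norm_num), h1.differentiable (by norm_num),
    (contDiff_succ_iff_deriv.mp h0).2.2.continuous⟩

lemma wronskian_hasDeriv {u₁ u₂ : ℝ → ℝ} (h1 : ContDiff ℝ 2 u₁) (h2 : ContDiff ℝ 2 u₂) (x : ℝ) :
    HasDerivAt (fun y => deriv u₁ y * u₂ y - u₁ y * deriv u₂ y)
      (deriv (deriv u₁) x * u₂ x - u₁ x * deriv (deriv u₂) x) x := by
  obtain ⟨hd1, hd1', _⟩ := contdiff_facts h1
  obtain ⟨hd2, hd2', _⟩ := contdiff_facts h2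
  have H := (((hd1' x).hasDerivAt.mul (hd2 x).hasDerivAt).sub
    ((hd1 x).hasDerivAt.mul (hd2' x).hasDerivAt))
  exact H.congr_deriv (by ring)

lemma sturm_strict (V : ℝ → ℝ) (E₁ E₂ : ℝ) (hE : E₁ < E₂) (u₁ u₂ : ℝ → ℝ) (a b : ℝ)
    (hab : a < b) (h1 : ContDiff ℝ 2 u₁) (h2 : ContDiff ℝ 2 u₂)
    (hode₁ : ∀ x ∈ Icc a b, deriv (deriv u₁) x = (V x - E₁) * u₁ x)
    (hode₂ : ∀ x ∈ Icc a b, deriv (deriv u₂) x = (V x - E₂) * u₂ x)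
    (ha : u₁ a = 0) (hb : u₁ b = 0)
    (hp1 : ∀ x ∈ Ioo a b, 0 < u₁ x) (hp2 : ∀ x ∈ Ioo a b, 0 < u₂ x) : False := by
  obtain ⟨hd1, hd1', _⟩ := contdiff_facts h1
  obtain ⟨hd2, hd2', _⟩ := contdiff_facts h2
  set W : ℝ → ℝ := fun y => deriv u₁ y * u₂ y - u₁ y * deriv u₂ y with hWdef
  have hWc : Continuous W := by
    have c1 : ContDiff ℝ 1 (deriv u₁) := by
      have h2' : ContDiff ℝ ((1 : WithTop ℕ∞) + 1) u₁ := by norm_num at h1 ⊢; exact h1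
      exact (contDiff_succ_iff_deriv.mp h2').2.2
    have c2 : ContDiff ℝ 1 (deriv u₂) := by
      have h2' : ContDiff ℝ ((1 : WithTop ℕ∞) + 1) u₂ := by norm_num at h2 ⊢; exact h2
      exact (contDiff_succ_iff_deriv.mp h2').2.2
    exact ((c1.continuous.mul h2.continuous).sub (h1.continuous.mul c2.continuous))
  have hmono : StrictMonoOn W (Icc a b) := by
    apply strictMonoOn_of_deriv_pos (convex_Icc a b) hWc.continuousOn
    intro x hx
    rw [interior_Icc] at hx
    rw [(wronskian_hasDeriv h1 h2 x).deriv, hode₁ x (Ioo_subset_Icc_self hx),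
       hode₂ x (Ioo_subset_Icc_self hx)]
    have hpp : 0 < u₁ x * u₂ x := mul_pos (hp1 x hx) (hp2 x hx)
    nlinarith [hpp]
  have hWa : 0 ≤ W a := by
    have d1 : 0 ≤ deriv u₁ a :=
      deriv_sign_right (hd1 a) hab ha (fun x hx => (hp1 x hx).le)
    have d2 : 0 ≤ u₂ a :=
      cont_sign_right (h2.continuous.continuousAt) hab (fun x hx => (hp2 x hx).le)
    simp only [hWdef, ha, zero_mul, sub_zero]
    exact mul_nonneg d1 d2
  have hWb : W b ≤ 0 := by
    have d1 : deriv u₁ b ≤ 0 :=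
      deriv_sign_left (hd1 b) hab hb (fun x hx => (hp1 x hx).le)
    have d2 : 0 ≤ u₂ b :=
      cont_sign_left (h2.continuous.continuousAt) hab (fun x hx => (hp2 x hx).le)
    simp only [hWdef, hb, zero_mul, sub_zero]
    exact mul_nonpos_of_nonpos_of_nonneg d1 d2
  have := hmono (left_mem_Icc.mpr hab.le) (right_mem_Icc.mpr hab.le) hab
  linarith
lemma constOn_of_deriv_zero {f : ℝ → ℝ} {a b : ℝ} (hc : ContinuousOn f (Icc a b))
    (hd : DifferentiableOn ℝ f (Ioo a b)) (h0 : ∀ x ∈ Ioo a b, deriv f x = 0)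
    {x y : ℝ} (hx : x ∈ Icc a b) (hy : y ∈ Icc a b) : f x = f y := by
  have hd' : DifferentiableOn ℝ f (interior (Icc a b)) := by rwa [interior_Icc]
  have hm : MonotoneOn f (Icc a b) :=
    monotoneOn_of_deriv_nonneg (convex_Icc a b) hc hd'
      (fun z hz => by rw [interior_Icc] at hz; rw [h0 z hz])
  have ha : AntitoneOn f (Icc a b) :=
    antitoneOn_of_deriv_nonpos (convex_Icc a b) hc hd'
      (fun z hz => by rw [interior_Icc] at hz; rw [h0 z hz])
  rcases le_total x y with h | h
  · exact le_antisymm (hm hx hy h) (ha hx hy h)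
  · exact (le_antisymm (hm hy hx h) (ha hy hx h)).symm

lemma sturm_eq (V : ℝ → ℝ) (E : ℝ) (u₁ u₂ : ℝ → ℝ) (a b a' b' x₀ : ℝ)
    (haa' : a ≤ a') (hax : a' < x₀) (hxb : x₀ < b') (hb'b : b' ≤ b)
    (h1 : ContDiff ℝ 2 u₁) (h2 : ContDiff ℝ 2 u₂)
    (hode₁ : ∀ x ∈ Icc a b, deriv (deriv u₁) x = (V x - E) * u₁ x)
    (hode₂ : ∀ x ∈ Icc a b, deriv (deriv u₂) x = (V x - E) * u₂ x)
    (ha0 : u₁ a' = 0) (hb0 : u₁ b' = 0)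
    (hp1 : ∀ x ∈ Ioo a' b', 0 < u₁ x)
    (hp2 : ∀ x ∈ Ico a b, 0 < u₂ x) : False := by
  obtain ⟨hd1, hd1', _⟩ := contdiff_facts h1
  obtain ⟨hd2, hd2', _⟩ := contdiff_facts h2
  have hab : a < b := lt_of_le_of_lt haa' (lt_of_lt_of_le (hax.trans hxb) hb'b)
  set W : ℝ → ℝ := fun y => deriv u₁ y * u₂ y - u₁ y * deriv u₂ y with hWdef
  have hWc : Continuous W := by
    have c1 : ContDiff ℝ 1 (deriv u₁) := by
      have h2' : ContDiff ℝ ((1 : WithTop ℕ∞) + 1) u₁ := by norm_num at h1 ⊢; exact h1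
      exact (contDiff_succ_iff_deriv.mp h2').2.2
    have c2 : ContDiff ℝ 1 (deriv u₂) := by
      have h2' : ContDiff ℝ ((1 : WithTop ℕ∞) + 1) u₂ := by norm_num at h2 ⊢; exact h2
      exact (contDiff_succ_iff_deriv.mp h2').2.2
    exact ((c1.continuous.mul h2.continuous).sub (h1.continuous.mul c2.continuous))
  have hWd : Differentiable ℝ W := fun x => (wronskian_hasDeriv h1 h2 x).differentiableAt
  have hW0 : ∀ x ∈ Ioo a b, deriv W x = 0 := by
    intro x hx
    rw [(wronskian_hasDeriv h1 h2 x).deriv, hode₁ x (Ioo_subset_Icc_self hx),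
       hode₂ x (Ioo_subset_Icc_self hx)]
    ring
  have hWconst : ∀ x ∈ Icc a b, ∀ y ∈ Icc a b, W x = W y := fun x hx y hy =>
    constOn_of_deriv_zero hWc.continuousOn (hWd.differentiableOn) hW0 hx hy
  have ha'm : a' ∈ Icc a b := ⟨haa', le_of_lt (lt_of_lt_of_le (hax.trans hxb) hb'b)⟩
  have hb'm : b' ∈ Icc a b := ⟨le_trans haa' (hax.trans hxb).le, hb'b⟩
  have hWa : 0 ≤ W a' := by
    have d1 : 0 ≤ deriv u₁ a' :=
      deriv_sign_right (hd1 a') (hax.trans hxb) ha0 (fun x hx => (hp1 x hx).le)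
    have d2 : 0 ≤ u₂ a' := (hp2 a' ⟨haa', lt_of_lt_of_le (hax.trans hxb) hb'b⟩).le
    simp only [hWdef, ha0, zero_mul, sub_zero]
    exact mul_nonneg d1 d2
  have hWb : W b' ≤ 0 := by
    have d1 : deriv u₁ b' ≤ 0 :=
      deriv_sign_left (hd1 b') (hax.trans hxb) hb0 (fun x hx => (hp1 x hx).le)
    have d2 : 0 ≤ u₂ b' := by
      refine cont_sign_left (h2.continuous.continuousAt) hxb (fun x hx => ?_)
      exact (hp2 x ⟨le_trans haa' (hax.le.trans hx.1.le), lt_of_lt_of_le hx.2 hb'b⟩).le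
    simp only [hWdef, hb0, zero_mul, sub_zero]
    exact mul_nonpos_of_nonpos_of_nonneg d1 d2
  have hWzero : ∀ x ∈ Icc a b, W x = 0 := by
    intro x hx
    have e1 := hWconst x hx a' ha'm
    have e2 := hWconst a' ha'm b' hb'm
    linarith
  -- quotient g = u₁ / u₂ is constant on [a', x₀]
  have hu2pos : ∀ x ∈ Icc a' x₀, 0 < u₂ x :=
    fun x hx => hp2 x ⟨le_trans haa' hx.1, lt_of_le_of_lt hx.2 (lt_of_lt_of_le hxb hb'b)⟩
  set g : ℝ → ℝ := fun y => u₁ y / u₂ y with hgdef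
  have hgc : ContinuousOn g (Icc a' x₀) :=
    (h1.continuous.continuousOn).div (h2.continuous.continuousOn)
      (fun x hx => (hu2pos x hx).ne')
  have hgderiv : ∀ x ∈ Ioo a' x₀, HasDerivAt g (W x / u₂ x ^ 2) x := by
    intro x hx
    have hx' : x ∈ Icc a' x₀ := Ioo_subset_Icc_self hx
    exact (hd1 x).hasDerivAt.div (hd2 x).hasDerivAt (hu2pos x hx').ne'
  have hgd : DifferentiableOn ℝ g (Ioo a' x₀) :=
    fun x hx => ((hgderiv x hx).differentiableAt).differentiableWithinAt
  have hg0 : ∀ x ∈ Ioo a' x₀, deriv g x = 0 := by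
    intro x hx
    rw [(hgderiv x hx).deriv,
      hWzero x ⟨le_trans haa' hx.1.le, le_trans hx.2.le (le_trans hxb.le hb'b)⟩, zero_div]
  have hgeq : g a' = g x₀ :=
    constOn_of_deriv_zero hgc hgd hg0 (left_mem_Icc.mpr hax.le) (right_mem_Icc.mpr hax.le)
  have hga : g a' = 0 := by simp [hgdef, ha0]
  have : u₁ x₀ = 0 := by
    have hx₀ : x₀ ∈ Icc a' x₀ := right_mem_Icc.mpr hax.le
    have := hgeq.symm.trans hga
    rwa [hgdef, div_eq_zero_iff, or_iff_left (hu2pos x₀ hx₀).ne'] at this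
  exact absurd this (hp1 x₀ ⟨hax, hxb⟩).ne'
lemma ode_neg {V : ℝ → ℝ} {E : ℝ} {u : ℝ → ℝ} {s : Set ℝ}
    (h : ∀ x ∈ s, deriv (deriv u) x = (V x - E) * u x) :
    ∀ x ∈ s, deriv (deriv (fun y => -u y)) x = (V x - E) * (-u x) := by
  intro x hx
  have e : deriv (fun y => -u y) = fun y => -deriv u y := funext fun y => deriv.neg
  rw [e]
  have e2 : deriv (fun y => -deriv u y) x = -(deriv (deriv u) x) := deriv.neg
  rw [e2, h x hx]; ring

lemma same_sign {u : ℝ → ℝ} (hc : Continuous u) {s : Set ℝ} (hs : s.OrdConnected)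
    (hne : ∀ x ∈ s, u x ≠ 0) {x₀ x : ℝ} (hx₀ : x₀ ∈ s) (hx : x ∈ s) : 0 < u x * u x₀ := by
  have ivt : ∀ y z : ℝ, y ∈ s → z ∈ s → u y < 0 → 0 < u z → False := by
    intro y z hy hz hyneg hzpos
    have h0m : (0:ℝ) ∈ uIcc (u y) (u z) := mem_uIcc.mpr (Or.inl ⟨hyneg.le, hzpos.le⟩)
    obtain ⟨w, hw, hw0⟩ := intermediate_value_uIcc hc.continuousOn h0m
    exact hne w (hs.uIcc_subset hy hz hw) hw0
  rcases lt_or_gt_of_ne (hne x hx) with h | h <;>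
    rcases lt_or_gt_of_ne (hne x₀ hx₀) with h0 | h0
  · nlinarith
  · exact absurd (ivt x x₀ hx hx₀ h h0) id
  · exact absurd (ivt x₀ x hx₀ hx h0 h) id
  · nlinarith

lemma consecutive_zeros {u : ℝ → ℝ} (hc : Continuous u) {a b x₀ : ℝ}
    (hax : a < x₀) (hxb : x₀ < b) (ha : u a = 0) (hb : u b = 0) (hx₀ : u x₀ ≠ 0) :
    ∃ a' b', a ≤ a' ∧ a' < x₀ ∧ x₀ < b' ∧ b' ≤ b ∧ u a' = 0 ∧ u b' = 0 ∧
      ∀ x ∈ Ioo a' b', u x ≠ 0 := by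
  have hcl : IsClosed {x : ℝ | u x = 0} := isClosed_eq hc continuous_const
  set S₁ : Set ℝ := Icc a x₀ ∩ {x | u x = 0} with hS₁def
  have hS₁c : IsClosed S₁ := isClosed_Icc.inter hcl
  have hne₁ : S₁.Nonempty := ⟨a, ⟨le_rfl, hax.le⟩, ha⟩
  have hbdd₁ : BddAbove S₁ := ⟨x₀, fun y hy => hy.1.2⟩
  have ha'mem : sSup S₁ ∈ S₁ := hS₁c.csSup_mem hne₁ hbdd₁
  set a' := sSup S₁
  have ha'lt : a' < x₀ := lt_of_le_of_ne ha'mem.1.2 (fun h => hx₀ (h ▸ ha'mem.2))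
  set S₂ : Set ℝ := Icc x₀ b ∩ {x | u x = 0} with hS₂def
  have hS₂c : IsClosed S₂ := isClosed_Icc.inter hcl
  have hne₂ : S₂.Nonempty := ⟨b, ⟨hxb.le, le_rfl⟩, hb⟩
  have hbdd₂ : BddBelow S₂ := ⟨x₀, fun y hy => hy.1.1⟩
  have hb'mem : sInf S₂ ∈ S₂ := hS₂c.csInf_mem hne₂ hbdd₂
  set b' := sInf S₂
  refine ⟨a', b', ha'mem.1.1, ha'lt, ?_, hb'mem.1.2, ha'mem.2, hb'mem.2, ?_⟩
  · exact lt_of_le_of_ne hb'mem.1.1 (fun h => hx₀ (h.symm ▸ hb'mem.2))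
  · intro x hx hx0
    rcases le_or_gt x x₀ with h | h
    · have hx1 : a ≤ x := le_trans ha'mem.1.1 hx.1.le
      have : x ≤ a' := le_csSup hbdd₁ ⟨⟨hx1, h⟩, hx0⟩
      exact absurd this (not_le.mpr hx.1)
    · have hx2 : x ≤ b := le_trans hx.2.le hb'mem.1.2
      have : b' ≤ x := csInf_le hbdd₂ ⟨⟨h.le, hx2⟩, hx0⟩
      exact absurd this (not_le.mpr hx.2)
/-- **Sturm Comparison Theorem.** Let `V` be bounded and continuous, `E₁ ≤ E₂`,
and for `j = 1,2` let `u_j` solve `−u″ + Vu = E_j u` on `[a,b]`, neither identically zero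
there. If `u₁(a) = u₁(b) = 0` then: when `E₂ > E₁`, `u₂` has a zero in `(a,b)`; when
`E₂ = E₁` and `u₂(a) ≠ 0`, `u₂` has a zero in `(a,b)`. -/
theorem sturm_comparison (V : ℝ → ℝ) (hVb : ∃ M, ∀ x, |V x| ≤ M) (hVc : Continuous V)
    (E₁ E₂ : ℝ) (hE : E₁ ≤ E₂) (u₁ u₂ : ℝ → ℝ) (a b : ℝ) (hab : a < b)
    (hu₁ : ContDiff ℝ 2 u₁) (hu₂ : ContDiff ℝ 2 u₂)
    (hode₁ : ∀ x ∈ Icc a b, deriv (deriv u₁) x = (V x - E₁) * u₁ x)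
    (hode₂ : ∀ x ∈ Icc a b, deriv (deriv u₂) x = (V x - E₂) * u₂ x)
    (hnz₁ : ∃ x ∈ Icc a b, u₁ x ≠ 0) (hnz₂ : ∃ x ∈ Icc a b, u₂ x ≠ 0)
    (ha : u₁ a = 0) (hb : u₁ b = 0) :
    (E₁ < E₂ → ∃ x ∈ Ioo a b, u₂ x = 0) ∧
    (E₁ = E₂ → u₂ a ≠ 0 → ∃ x ∈ Ioo a b, u₂ x = 0) := by
  obtain ⟨x₀, hx₀m, hx₀⟩ := hnz₁
  have hx₀Ioo : x₀ ∈ Ioo a b :=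
    ⟨lt_of_le_of_ne hx₀m.1 (fun h => hx₀ (h ▸ ha)), lt_of_le_of_ne hx₀m.2 (fun h => hx₀ (h.symm ▸ hb))⟩
  obtain ⟨a', b', haa', hax, hxb, hb'b, ha'0, hb'0, hnz⟩ :=
    consecutive_zeros hu₁.continuous hx₀Ioo.1 hx₀Ioo.2 ha hb hx₀
  have hx₀' : x₀ ∈ Ioo a' b' := ⟨hax, hxb⟩
  obtain ⟨v₁, hv₁c, hv₁ode, hv₁a, hv₁b, hv₁pos⟩ :
      ∃ v : ℝ → ℝ, ContDiff ℝ 2 v ∧ (∀ x ∈ Icc a b, deriv (deriv v) x = (V x - E₁) * v x) ∧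
        v a' = 0 ∧ v b' = 0 ∧ ∀ x ∈ Ioo a' b', 0 < v x := by
    rcases lt_or_gt_of_ne hx₀ with hneg | hpos
    · refine ⟨fun y => -u₁ y, hu₁.neg, ode_neg hode₁, by simp [ha'0], by simp [hb'0], ?_⟩
      intro x hx
      have := same_sign hu₁.continuous ordConnected_Ioo hnz hx₀' hx
      simp only [neg_pos]
      nlinarith
    · refine ⟨u₁, hu₁, hode₁, ha'0, hb'0, ?_⟩
      intro x hx
      have := same_sign hu₁.continuous ordConnected_Ioo hnz hx₀' hx
      nlinarith
  have main : (∀ x ∈ Ioo a b, u₂ x ≠ 0) →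
      (E₁ < E₂ → False) ∧ (E₁ = E₂ → u₂ a ≠ 0 → False) := by
    intro hnz2
    have hm : (a+b)/2 ∈ Ioo a b := ⟨by linarith, by linarith⟩
    have hbdry : ∀ w : ℝ → ℝ, Continuous w → (∀ x ∈ Ioo a b, w x ≠ 0) →
        w ((a+b)/2) > 0 → w a < 0 → False := by
      intro w hwc hwnz hwm hwa
      have h0m : (0:ℝ) ∈ uIcc (w a) (w ((a+b)/2)) := mem_uIcc.mpr (Or.inl ⟨hwa.le, hwm.le⟩)
      obtain ⟨z, hz, hz0⟩ := intermediate_value_uIcc hwc.continuousOn h0m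
      have hz' : z ∈ Icc a ((a+b)/2) := by rwa [uIcc_of_le (by linarith)] at hz
      have hza : z ≠ a := fun h' => hwa.ne (h' ▸ hz0)
      exact hwnz z ⟨lt_of_le_of_ne hz'.1 (Ne.symm hza), lt_of_le_of_lt hz'.2 hm.2⟩ hz0
    obtain ⟨v₂, hv₂c, hv₂ode, hv₂pos, hv₂a⟩ :
        ∃ v : ℝ → ℝ, ContDiff ℝ 2 v ∧ (∀ x ∈ Icc a b, deriv (deriv v) x = (V x - E₂) * v x) ∧
          (∀ x ∈ Ioo a b, 0 < v x) ∧ (u₂ a ≠ 0 → 0 < v a) := by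
      rcases lt_or_gt_of_ne (hnz2 _ hm) with hneg | hpos
      · refine ⟨fun y => -u₂ y, hu₂.neg, ode_neg hode₂, ?_, ?_⟩
        · intro x hx
          have := same_sign hu₂.continuous ordConnected_Ioo hnz2 hm hx
          simp only [neg_pos]; nlinarith
        · intro h2a
          rcases lt_or_gt_of_ne h2a with h | h
          · simpa using h
          · exfalso
            refine hbdry (fun y => -u₂ y) hu₂.continuous.neg
              (fun x hx h0 => hnz2 x hx (neg_eq_zero.mp h0)) (by simpa using hneg) (by simpa using h)
      · refine ⟨u₂, hu₂, hode₂, ?_, ?_⟩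
        · intro x hx
          have := same_sign hu₂.continuous ordConnected_Ioo hnz2 hm hx
          nlinarith
        · intro h2a
          rcases lt_or_gt_of_ne h2a with h | h
          · exact absurd (hbdry u₂ hu₂.continuous hnz2 hpos h) id
          · exact h
    constructor
    · intro hlt
      exact sturm_strict V E₁ E₂ hlt v₁ v₂ a' b' (hax.trans hxb) hv₁c hv₂c
        (fun x hx => hv₁ode x (Icc_subset_Icc haa' hb'b hx))
        (fun x hx => hv₂ode x (Icc_subset_Icc haa' hb'b hx))
        hv₁a hv₁b hv₁pos
        (fun x hx => hv₂pos x ⟨lt_of_le_of_lt haa' hx.1, lt_of_lt_of_le hx.2 hb'b⟩)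
    · intro heq h2a
      have hv₂ode' : ∀ x ∈ Icc a b, deriv (deriv v₂) x = (V x - E₁) * v₂ x := by
        rw [heq]; exact hv₂ode
      refine sturm_eq V E₁ v₁ v₂ a b a' b' x₀ haa' hax hxb hb'b hv₁c hv₂c
        hv₁ode hv₂ode' hv₁a hv₁b hv₁pos ?_
      intro x hx
      rcases eq_or_lt_of_le hx.1 with h | h
      · exact h ▸ hv₂a h2a
      · exact hv₂pos x ⟨h, hx.2⟩
  constructor
  · intro hlt
    by_contra hcon
    push_neg at hcon
    exact (main hcon).1 hlt
  · intro heq h2a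
    by_contra hcon
    push_neg at hcon
    exact (main hcon).2 heq h2a
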